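/- Let k be a field and let S = k[[x, y, z, w]] be the power series ring. Then the k-algebra map S → k[[t]] sending x ↦ t⁵, y ↦ t⁶, z ↦ t¹³, w ↦ t¹⁴ induces an isomorphism S/(y³ − xz, yz − xw, x⁴ − yw, z² − y²w, x³y² − zw, x³z − w²) ≅ k[[t⁵, t⁶, t¹³, t¹⁴]], the complete numerical semigroup ring generated by t⁵, t⁶, t¹³, t¹⁴ inside k[[t]]. -/

import Mathlib

universe u

open MvPowerSeries

/-- The defining relations `(y³−xz, yz−xw, x⁴−yw, z²−y²w, x³y²−zw, x³z−w²)` inside the power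
series ring `k[[x,y,z,w]]`, where `x, y, z, w` are the four variables. -/
noncomputable def theRelations (k : Type u) [Field k] : Ideal (MvPowerSeries (Fin 4) k) :=
  Ideal.span
    ({(X 1) ^ 3 - (X 0) * (X 2),
      (X 1) * (X 2) - (X 0) * (X 3),
      (X 0) ^ 4 - (X 1) * (X 3),
      (X 2) ^ 2 - (X 1) ^ 2 * (X 3),
      (X 0) ^ 3 * (X 1) ^ 2 - (X 2) * (X 3),
      (X 0) ^ 3 * (X 2) - (X 3) ^ 2} : Set (MvPowerSeries (Fin 4) k))

namespace NS17

open Finsupp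

abbrev M := Fin 4 →₀ ℕ

noncomputable def mk4 (a b c d : ℕ) : M := Finsupp.equivFunOnFinite.symm ![a, b, c, d]

@[simp] lemma mk4_apply (a b c d : ℕ) (i : Fin 4) : mk4 a b c d i = ![a, b, c, d] i := rfl

def wt (d : M) : ℕ := 5 * d 0 + 6 * d 1 + 13 * d 2 + 14 * d 3

noncomputable def big : Fin 6 → M
  | 0 => mk4 0 3 0 0
  | 1 => mk4 0 1 1 0
  | 2 => mk4 0 1 0 1
  | 3 => mk4 0 0 2 0
  | 4 => mk4 0 0 1 1
  | 5 => mk4 0 0 0 2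

noncomputable def small : Fin 6 → M
  | 0 => mk4 1 0 1 0
  | 1 => mk4 1 0 0 1
  | 2 => mk4 4 0 0 0
  | 3 => mk4 0 2 0 1
  | 4 => mk4 3 2 0 0
  | 5 => mk4 3 0 1 0

variable (k : Type u) [Field k]

noncomputable def Rel : Fin 6 → MvPowerSeries (Fin 4) k
  | 0 => (X 1) ^ 3 - (X 0) * (X 2)
  | 1 => (X 1) * (X 2) - (X 0) * (X 3)
  | 2 => (X 0) ^ 4 - (X 1) * (X 3)
  | 3 => (X 2) ^ 2 - (X 1) ^ 2 * (X 3)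
  | 4 => (X 0) ^ 3 * (X 1) ^ 2 - (X 2) * (X 3)
  | 5 => (X 0) ^ 3 * (X 2) - (X 3) ^ 2

noncomputable def sg : Fin 6 → k
  | 0 => 1
  | 1 => 1
  | 2 => -1
  | 3 => 1
  | 4 => -1
  | 5 => -1

lemma single_sum (a b c d : ℕ) :
    (single (0:Fin 4) a + single 1 b + single 2 c + single 3 d : M) = mk4 a b c d := by
  ext j; fin_cases j <;> simp [Finsupp.single_apply]

lemma monomial_mk4 (a b c d : ℕ) :
    (MvPowerSeries.monomial (R := k) (mk4 a b c d) (1:k))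
      = X 0 ^ a * X 1 ^ b * X 2 ^ c * X 3 ^ d := by
  rw [X_pow_eq, X_pow_eq, X_pow_eq, X_pow_eq, monomial_mul_monomial, monomial_mul_monomial,
    monomial_mul_monomial, single_sum]
  norm_num

lemma key_rel (i : Fin 6) :
    (MvPowerSeries.monomial (R := k) (big i) 1) - MvPowerSeries.monomial (R := k) (small i) 1
      = MvPowerSeries.C (σ := Fin 4) (R := k) (sg k i) * Rel k i := by
  fin_cases i <;>
    simp [Rel, big, small, sg, monomial_mk4] <;>
    ring



lemma wt_add (p q : M) : wt (p + q) = wt p + wt q := by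
  simp [wt, Finsupp.add_apply]; ring

@[simp] lemma wt_mk4 (a b c d : ℕ) : wt (mk4 a b c d) = 5*a + 6*b + 13*c + 14*d := by
  simp [wt]

noncomputable def rwt : Fin 6 → ℕ := fun i => wt (big i)

lemma wt_small (i : Fin 6) : wt (small i) = rwt i := by
  fin_cases i <;> simp [rwt, big, small]

lemma sg_ne_zero (i : Fin 6) : sg k i ≠ 0 := by
  fin_cases i <;> simp [sg]

lemma Rel_homog (i : Fin 6) (q : M) (h : MvPowerSeries.coeff (R := k) q (Rel k i) ≠ 0) :
    wt q = rwt i := by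
  have h2 : MvPowerSeries.coeff (R := k) q
      ((MvPowerSeries.monomial (R := k) (big i) 1) - MvPowerSeries.monomial (R := k) (small i) 1) ≠ 0 := by
    rw [key_rel]
    intro hc
    apply h
    have : MvPowerSeries.C (σ := Fin 4) (R := k) (sg k i) * Rel k i = (sg k i) • Rel k i := by
      rw [MvPowerSeries.smul_eq_C_mul]
    rw [this, map_smul, smul_eq_mul] at hc
    rcases mul_eq_zero.mp hc with h' | h'
    · exact absurd h' (sg_ne_zero k i)
    · exact h'
  rw [map_sub, MvPowerSeries.coeff_monomial, MvPowerSeries.coeff_monomial] at h2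
  by_cases hb : q = big i
  · rw [hb]; rfl
  · by_cases hs : q = small i
    · rw [hs, wt_small]
    · simp [hb, hs] at h2

/-- normal form monomial of a given weight -/
noncomputable def nf (n : ℕ) : M :=
  if n % 5 = 0 then mk4 (n / 5) 0 0 0
  else if n % 5 = 1 then mk4 ((n - 6) / 5) 1 0 0
  else if n % 5 = 2 then mk4 ((n - 12) / 5) 2 0 0
  else if n % 5 = 3 then mk4 ((n - 13) / 5) 0 1 0
  else mk4 ((n - 14) / 5) 0 0 1

lemma wt_mem (d : M) : wt d ∈ AddSubmonoid.closure ({5, 6, 13, 14} : Set ℕ) := by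
  have h5 : (5 : ℕ) ∈ AddSubmonoid.closure ({5, 6, 13, 14} : Set ℕ) :=
    AddSubmonoid.subset_closure (by simp)
  have h6 : (6 : ℕ) ∈ AddSubmonoid.closure ({5, 6, 13, 14} : Set ℕ) :=
    AddSubmonoid.subset_closure (by simp)
  have h13 : (13 : ℕ) ∈ AddSubmonoid.closure ({5, 6, 13, 14} : Set ℕ) :=
    AddSubmonoid.subset_closure (by simp)
  have h14 : (14 : ℕ) ∈ AddSubmonoid.closure ({5, 6, 13, 14} : Set ℕ) :=
    AddSubmonoid.subset_closure (by simp)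
  have : ∀ (m : ℕ) (x : ℕ), x ∈ AddSubmonoid.closure ({5, 6, 13, 14} : Set ℕ) →
      m * x ∈ AddSubmonoid.closure ({5, 6, 13, 14} : Set ℕ) := by
    intro m x hx
    rw [← smul_eq_mul]
    exact AddSubmonoid.nsmul_mem _ hx m
  have hw : wt d = d 0 * 5 + (d 1 * 6 + (d 2 * 13 + d 3 * 14)) := by rw [wt]; ring
  rw [hw]
  exact AddSubmonoid.add_mem _ (this (d 0) 5 h5) (AddSubmonoid.add_mem _ (this (d 1) 6 h6)
    (AddSubmonoid.add_mem _ (this (d 2) 13 h13) (this (d 3) 14 h14)))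

lemma closure_bound {n : ℕ} (h : n ∈ AddSubmonoid.closure ({5, 6, 13, 14} : Set ℕ)) :
    (n % 5 = 1 → 6 ≤ n) ∧ (n % 5 = 2 → 12 ≤ n) ∧ (n % 5 = 3 → 13 ≤ n) ∧ (n % 5 = 4 → 14 ≤ n) := by
  induction h using AddSubmonoid.closure_induction with
  | mem x hx => rcases hx with rfl | rfl | rfl | rfl <;> omega
  | zero => omega
  | add a b _ _ ha hb => omega

lemma wt_nf {n : ℕ} (h : n ∈ AddSubmonoid.closure ({5, 6, 13, 14} : Set ℕ)) :
    wt (nf n) = n := by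
  have hb := closure_bound h
  rw [nf]
  split_ifs with h0 h1 h2 h3 <;> simp only [wt_mk4] <;> omega



def V (d : M) : ℕ := 12 * d 1 + 27 * d 2 + 29 * d 3

noncomputable def nxt (i : Fin 6) (d : M) : M := d - big i + small i

lemma nxt_apply (i : Fin 6) (d : M) (j : Fin 4) :
    nxt i d j = d j - big i j + small i j := by
  simp [nxt, Finsupp.add_apply, Finsupp.tsub_apply]

noncomputable def go : ℕ → M → Fin 6 → MvPowerSeries (Fin 4) k
  | 0, _ => 0
  | (fuel+1), d =>
    if 1 ≤ d 2 ∧ 1 ≤ d 3 then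
      (Pi.single (4 : Fin 6) (MvPowerSeries.C (σ := Fin 4) (R := k) (sg k 4)
        * MvPowerSeries.monomial (R := k) (d - big 4) 1) : Fin 6 → MvPowerSeries (Fin 4) k)
        + go fuel (nxt 4 d)
    else if 1 ≤ d 1 ∧ 1 ≤ d 2 then
      (Pi.single (1 : Fin 6) (MvPowerSeries.C (σ := Fin 4) (R := k) (sg k 1)
        * MvPowerSeries.monomial (R := k) (d - big 1) 1) : Fin 6 → MvPowerSeries (Fin 4) k)
        + go fuel (nxt 1 d)
    else if 1 ≤ d 1 ∧ 1 ≤ d 3 then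
      (Pi.single (2 : Fin 6) (MvPowerSeries.C (σ := Fin 4) (R := k) (sg k 2)
        * MvPowerSeries.monomial (R := k) (d - big 2) 1) : Fin 6 → MvPowerSeries (Fin 4) k)
        + go fuel (nxt 2 d)
    else if 3 ≤ d 1 then
      (Pi.single (0 : Fin 6) (MvPowerSeries.C (σ := Fin 4) (R := k) (sg k 0)
        * MvPowerSeries.monomial (R := k) (d - big 0) 1) : Fin 6 → MvPowerSeries (Fin 4) k)
        + go fuel (nxt 0 d)
    else if 2 ≤ d 2 then
      (Pi.single (3 : Fin 6) (MvPowerSeries.C (σ := Fin 4) (R := k) (sg k 3)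
        * MvPowerSeries.monomial (R := k) (d - big 3) 1) : Fin 6 → MvPowerSeries (Fin 4) k)
        + go fuel (nxt 3 d)
    else if 2 ≤ d 3 then
      (Pi.single (5 : Fin 6) (MvPowerSeries.C (σ := Fin 4) (R := k) (sg k 5)
        * MvPowerSeries.monomial (R := k) (d - big 5) 1) : Fin 6 → MvPowerSeries (Fin 4) k)
        + go fuel (nxt 5 d)
    else 0

lemma step_eq (i : Fin 6) (d : M) (hle : big i ≤ d) (u : Fin 6 → MvPowerSeries (Fin 4) k) :
    ∑ j : Fin 6, ((Pi.single i (MvPowerSeries.C (σ := Fin 4) (R := k) (sg k i)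
        * MvPowerSeries.monomial (R := k) (d - big i) 1) : Fin 6 → MvPowerSeries (Fin 4) k) + u) j
        * Rel k j
      = (MvPowerSeries.monomial (R := k) d 1 - MvPowerSeries.monomial (R := k) (nxt i d) 1)
        + ∑ j : Fin 6, u j * Rel k j := by
  simp only [Pi.add_apply, add_mul, Finset.sum_add_distrib]
  congr 1
  rw [Fintype.sum_eq_single i (fun j hj => by rw [Pi.single_eq_of_ne hj, zero_mul])]
  rw [Pi.single_eq_same, mul_comm (MvPowerSeries.C (σ := Fin 4) (R := k) (sg k i)), mul_assoc, ← key_rel,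
    mul_sub, monomial_mul_monomial, monomial_mul_monomial, one_mul,
    tsub_add_cancel_of_le hle]
  rfl



lemma go_spec : ∀ fuel (d : M), V d < fuel →
    MvPowerSeries.monomial (R := k) d (1:k) - MvPowerSeries.monomial (R := k) (nf (wt d)) 1
      = ∑ i : Fin 6, go k fuel d i * Rel k i := by
  intro fuel
  induction fuel with
  | zero => intro d hd; omega
  | succ fuel ih =>
    intro d hd
    have branch : ∀ i : Fin 6, big i ≤ d → wt (nxt i d) = wt d → V (nxt i d) < V d →
        MvPowerSeries.monomial (R := k) d (1:k) - MvPowerSeries.monomial (R := k) (nf (wt d)) 1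
          = ∑ j : Fin 6, ((Pi.single i (MvPowerSeries.C (σ := Fin 4) (R := k) (sg k i)
              * MvPowerSeries.monomial (R := k) (d - big i) 1) : Fin 6 → MvPowerSeries (Fin 4) k)
            + go k fuel (nxt i d)) j * Rel k j := by
      intro i hle hwt hV
      rw [step_eq k i d hle, ← ih (nxt i d) (by omega), hwt]
      ring
    rw [go]
    split_ifs with h1 h2 h3 h4 h5 h6
    · exact branch 4 (by rw [Finsupp.le_def]; intro j; fin_cases j <;> simp [big, mk4] <;> omega)
        (by unfold wt; simp only [nxt_apply]; simp [big, small, mk4]; omega)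
        (by unfold V; simp only [nxt_apply]; simp [big, small, mk4]; omega)
    · exact branch 1 (by rw [Finsupp.le_def]; intro j; fin_cases j <;> simp [big, mk4] <;> omega)
        (by unfold wt; simp only [nxt_apply]; simp [big, small, mk4]; omega)
        (by unfold V; simp only [nxt_apply]; simp [big, small, mk4]; omega)
    · exact branch 2 (by rw [Finsupp.le_def]; intro j; fin_cases j <;> simp [big, mk4] <;> omega)
        (by unfold wt; simp only [nxt_apply]; simp [big, small, mk4]; omega)
        (by unfold V; simp only [nxt_apply]; simp [big, small, mk4]; omega)
    · exact branch 0 (by rw [Finsupp.le_def]; intro j; fin_cases j <;> simp [big, mk4] <;> omega)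
        (by unfold wt; simp only [nxt_apply]; simp [big, small, mk4]; omega)
        (by unfold V; simp only [nxt_apply]; simp [big, small, mk4]; omega)
    · exact branch 3 (by rw [Finsupp.le_def]; intro j; fin_cases j <;> simp [big, mk4] <;> omega)
        (by unfold wt; simp only [nxt_apply]; simp [big, small, mk4]; omega)
        (by unfold V; simp only [nxt_apply]; simp [big, small, mk4]; omega)
    · exact branch 5 (by rw [Finsupp.le_def]; intro j; fin_cases j <;> simp [big, mk4] <;> omega)
        (by unfold wt; simp only [nxt_apply]; simp [big, small, mk4]; omega)
        (by unfold V; simp only [nxt_apply]; simp [big, small, mk4]; omega)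
    · -- terminal: d is a normal monomial
      have hw : wt d = 5 * d 0 + 6 * d 1 + 13 * d 2 + 14 * d 3 := rfl
      have hd' : d = nf (wt d) := by
        have hcase : (d 1 = 0 ∧ d 2 = 0 ∧ d 3 = 0) ∨ (d 1 = 1 ∧ d 2 = 0 ∧ d 3 = 0)
            ∨ (d 1 = 2 ∧ d 2 = 0 ∧ d 3 = 0) ∨ (d 1 = 0 ∧ d 2 = 1 ∧ d 3 = 0)
            ∨ (d 1 = 0 ∧ d 2 = 0 ∧ d 3 = 1) := by omega
        rcases hcase with h | h | h | h | h <;>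
          [rw [nf, if_pos (by omega)];
           rw [nf, if_neg (by omega), if_pos (by omega)];
           rw [nf, if_neg (by omega), if_neg (by omega), if_pos (by omega)];
           rw [nf, if_neg (by omega), if_neg (by omega), if_neg (by omega), if_pos (by omega)];
           rw [nf, if_neg (by omega), if_neg (by omega), if_neg (by omega), if_neg (by omega)]] <;>
          (ext j; fin_cases j <;> simp [mk4] <;> omega)
      rw [← hd']
      simp

noncomputable def red (d : M) : Fin 6 → MvPowerSeries (Fin 4) k := go k (V d + 1) d

lemma red_spec (d : M) :
    MvPowerSeries.monomial (R := k) d (1:k) - MvPowerSeries.monomial (R := k) (nf (wt d)) 1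
      = ∑ i : Fin 6, red k d i * Rel k i :=
  go_spec k (V d + 1) d (by omega)



noncomputable def Wfin (n : ℕ) : Finset M :=
  (Finset.Iic (mk4 n n n n)).filter (fun d => wt d = n)

lemma mem_Wfin {n : ℕ} {d : M} : d ∈ Wfin n ↔ wt d = n := by
  constructor
  · intro h; exact (Finset.mem_filter.mp h).2
  · intro h
    refine Finset.mem_filter.mpr ⟨Finset.mem_Iic.mpr ?_, h⟩
    rw [Finsupp.le_def]
    intro i
    have h0 := h
    simp only [wt] at h0
    fin_cases i <;> simp <;> omega

section Phi


noncomputable def phi : MvPowerSeries (Fin 4) k →ₐ[k] PowerSeries k where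
  toFun f := PowerSeries.mk fun n => ∑ d ∈ Wfin n, MvPowerSeries.coeff (R := k) d f
  map_one' := by
    ext n
    simp only [PowerSeries.coeff_mk, MvPowerSeries.coeff_one]
    rw [Finset.sum_ite_eq' (Wfin n) 0 (fun _ => (1:k))]
    simp only [mem_Wfin, PowerSeries.coeff_one]
    have h0 : wt 0 = 0 := by simp [wt]
    rcases eq_or_ne n 0 with rfl | h
    · simp [h0]
    · simp [h0, h, Ne.symm h]
  map_mul' := by
    intro f g
    ext n
    simp only [PowerSeries.coeff_mk, PowerSeries.coeff_mul, MvPowerSeries.coeff_mul]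
    have hL : ∑ d ∈ Wfin n, ∑ pq ∈ Finset.HasAntidiagonal.antidiagonal d,
          (MvPowerSeries.coeff (R := k) pq.1 f) * (MvPowerSeries.coeff (R := k) pq.2 g)
        = ∑ pq ∈ (Wfin n).biUnion (fun d => Finset.HasAntidiagonal.antidiagonal d),
          (MvPowerSeries.coeff (R := k) pq.1 f) * (MvPowerSeries.coeff (R := k) pq.2 g) := by
      rw [Finset.sum_biUnion]
      intro x _ y _ hxy
      simp only [Finset.disjoint_left, Finset.HasAntidiagonal.mem_antidiagonal]
      intro a ha hb
      exact hxy (by rw [← ha, ← hb])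
    have hR : ∑ ab ∈ Finset.HasAntidiagonal.antidiagonal n,
          (∑ u ∈ Wfin ab.1, MvPowerSeries.coeff (R := k) u f) * (∑ v ∈ Wfin ab.2, MvPowerSeries.coeff (R := k) v g)
        = ∑ pq ∈ (Finset.HasAntidiagonal.antidiagonal n).biUnion (fun ab => Wfin ab.1 ×ˢ Wfin ab.2),
          (MvPowerSeries.coeff (R := k) pq.1 f) * (MvPowerSeries.coeff (R := k) pq.2 g) := by
      rw [Finset.sum_biUnion]
      · exact Finset.sum_congr rfl fun ab _ => by
          rw [Finset.sum_mul_sum, ← Finset.sum_product']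
      · intro x hx y hy hxy
        simp only [Finset.disjoint_left, Finset.mem_product, mem_Wfin]
        rintro a ⟨ha1, ha2⟩ ⟨hb1, hb2⟩
        exact hxy (Prod.ext (by rw [← ha1, hb1]) (by rw [← ha2, hb2]))
    rw [hL, hR]
    apply Finset.sum_congr _ (fun _ _ => rfl)
    ext pq
    simp only [Finset.mem_biUnion, Finset.HasAntidiagonal.mem_antidiagonal, mem_Wfin, Finset.mem_product]
    constructor
    · rintro ⟨d, hd, hpq⟩
      exact ⟨(wt pq.1, wt pq.2), by rw [← wt_add, hpq, hd], rfl, rfl⟩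
    · rintro ⟨ab, hab, h1, h2⟩
      exact ⟨pq.1 + pq.2, by rw [wt_add, h1, h2, hab], rfl⟩
  map_zero' := by ext n; simp
  map_add' := by intro f g; ext n; simp [Finset.sum_add_distrib]
  commutes' := by
    intro c
    ext n
    simp only [← MvPowerSeries.c_eq_algebraMap, PowerSeries.coeff_mk, MvPowerSeries.coeff_C]
    rw [Finset.sum_ite_eq' (Wfin n) 0 (fun _ => c)]
    simp only [mem_Wfin]
    rw [show ((C (σ := Unit) (R := k)) c : PowerSeries k) = PowerSeries.C (R := k) c from rfl, PowerSeries.coeff_C]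
    have h0 : wt 0 = 0 := by simp [wt]
    rcases eq_or_ne n 0 with rfl | h
    · simp [h0]
    · simp [h0, h, Ne.symm h]

lemma coeff_phi (f : MvPowerSeries (Fin 4) k) (n : ℕ) :
    PowerSeries.coeff (R := k) n (phi k f) = ∑ d ∈ Wfin n, MvPowerSeries.coeff (R := k) d f := by
  simp [phi]

lemma phi_monomial (m : M) (a : k) :
    phi k (MvPowerSeries.monomial (R := k) m a) = PowerSeries.monomial (R := k) (wt m) a := by
  ext n
  rw [coeff_phi]
  simp only [MvPowerSeries.coeff_monomial, PowerSeries.coeff_monomial]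
  rw [Finset.sum_ite_eq' (Wfin n) m (fun _ => a)]
  simp only [mem_Wfin]
  by_cases h : wt m = n
  · simp [h]
  · rw [if_neg h, if_neg (fun hn => h hn.symm)]

end Phi


lemma phi_X (j : Fin 4) :
    phi k (X j) = (PowerSeries.X : PowerSeries k) ^ (![5, 6, 13, 14] j : ℕ) := by
  have : (X j : MvPowerSeries (Fin 4) k) = MvPowerSeries.monomial (R := k) (single j 1) 1 := rfl
  rw [this, phi_monomial, PowerSeries.X_pow_eq]
  congr 1
  fin_cases j <;> simp [wt, Finsupp.single_apply]

lemma phi_Rel (i : Fin 6) : phi k (Rel k i) = 0 := by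
  have h0 := phi_X k 0
  have h1 := phi_X k 1
  have h2 := phi_X k 2
  have h3 := phi_X k 3
  simp only [Matrix.cons_val_zero, Matrix.cons_val_one, Matrix.head_cons] at h0 h1 h2 h3
  have h2' : phi k (X 2) = (PowerSeries.X : PowerSeries k) ^ 13 := by rw [h2]; rfl
  have h3' : phi k (X 3) = (PowerSeries.X : PowerSeries k) ^ 14 := by rw [h3]; rfl
  fin_cases i <;>
    simp only [Rel, map_sub, map_mul, map_pow, h0, h1, h2', h3'] <;>
    ring

lemma ker_lemma (f : MvPowerSeries (Fin 4) k) (hf : phi k f = 0) :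
    ∃ s : Fin 6 → MvPowerSeries (Fin 4) k, f = ∑ i : Fin 6, s i * Rel k i := by
  set s : Fin 6 → MvPowerSeries (Fin 4) k := fun i =>
    (show MvPowerSeries (Fin 4) k from fun p =>
      ∑ d ∈ Wfin (wt p + rwt i), (MvPowerSeries.coeff (R := k) d f) *
        (MvPowerSeries.coeff (R := k) p (red k d i))) with hs
  refine ⟨s, ?_⟩
  ext e
  have hcs : ∀ (i : Fin 6) (p : M), MvPowerSeries.coeff (R := k) p (s i)
      = ∑ d ∈ Wfin (wt p + rwt i), (MvPowerSeries.coeff (R := k) d f) *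
        (MvPowerSeries.coeff (R := k) p (red k d i)) := fun i p => rfl
  rw [map_sum]
  have step1 : ∀ i : Fin 6, MvPowerSeries.coeff (R := k) e (s i * Rel k i)
      = ∑ pq ∈ Finset.HasAntidiagonal.antidiagonal e, ∑ d ∈ Wfin (wt e),
          (MvPowerSeries.coeff (R := k) d f) * ((MvPowerSeries.coeff (R := k) pq.1 (red k d i))
            * (MvPowerSeries.coeff (R := k) pq.2 (Rel k i))) := by
    intro i
    rw [MvPowerSeries.coeff_mul]
    refine Finset.sum_congr rfl ?_
    intro pq hpq
    have he : pq.1 + pq.2 = e := Finset.HasAntidiagonal.mem_antidiagonal.mp hpq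
    by_cases hR : MvPowerSeries.coeff (R := k) pq.2 (Rel k i) = 0
    · simp [hR]
    · have hq : wt pq.2 = rwt i := Rel_homog k i pq.2 hR
      have hWe : wt pq.1 + rwt i = wt e := by rw [← hq, ← wt_add, he]
      rw [hcs, hWe, Finset.sum_mul]
      refine Finset.sum_congr rfl fun d _ => by ring
  simp only [step1]
  have swap1 : ∀ i : Fin 6, ∑ pq ∈ Finset.HasAntidiagonal.antidiagonal e, ∑ d ∈ Wfin (wt e),
      (MvPowerSeries.coeff (R := k) d f) * ((MvPowerSeries.coeff (R := k) pq.1 (red k d i))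
        * (MvPowerSeries.coeff (R := k) pq.2 (Rel k i)))
      = ∑ d ∈ Wfin (wt e), ∑ pq ∈ Finset.HasAntidiagonal.antidiagonal e,
      (MvPowerSeries.coeff (R := k) d f) * ((MvPowerSeries.coeff (R := k) pq.1 (red k d i))
        * (MvPowerSeries.coeff (R := k) pq.2 (Rel k i))) := fun i => Finset.sum_comm
  simp only [swap1]
  rw [Finset.sum_comm]
  have inner : ∀ d ∈ Wfin (wt e), ∑ i : Fin 6, ∑ pq ∈ Finset.HasAntidiagonal.antidiagonal e,
      (MvPowerSeries.coeff (R := k) d f) * ((MvPowerSeries.coeff (R := k) pq.1 (red k d i))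
        * (MvPowerSeries.coeff (R := k) pq.2 (Rel k i)))
      = (MvPowerSeries.coeff (R := k) d f) *
        (MvPowerSeries.coeff (R := k) e (MvPowerSeries.monomial (R := k) d 1
          - MvPowerSeries.monomial (R := k) (nf (wt d)) 1)) := by
    intro d _
    rw [red_spec k d, map_sum]
    rw [Finset.mul_sum]
    refine Finset.sum_congr rfl fun i _ => ?_
    rw [MvPowerSeries.coeff_mul, Finset.mul_sum]
  rw [Finset.sum_congr rfl inner]
  have hzero : ∑ d ∈ Wfin (wt e), (MvPowerSeries.coeff (R := k) d f)
      * (MvPowerSeries.coeff (R := k) e (MvPowerSeries.monomial (R := k) (nf (wt d)) 1)) = 0 := by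
    have hc : ∀ d ∈ Wfin (wt e), (MvPowerSeries.coeff (R := k) d f)
        * (MvPowerSeries.coeff (R := k) e (MvPowerSeries.monomial (R := k) (nf (wt d)) 1))
        = (MvPowerSeries.coeff (R := k) d f)
          * (MvPowerSeries.coeff (R := k) e (MvPowerSeries.monomial (R := k) (nf (wt e)) 1)) := by
      intro d hd
      rw [mem_Wfin] at hd
      rw [hd]
    rw [Finset.sum_congr rfl hc, ← Finset.sum_mul]
    have h2 : ∑ d ∈ Wfin (wt e), MvPowerSeries.coeff (R := k) d f = 0 := by
      have h3 := congrArg (PowerSeries.coeff (R := k) (wt e)) hf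
      rw [coeff_phi] at h3
      simpa using h3
    rw [h2, zero_mul]
  simp only [map_sub, mul_sub, Finset.sum_sub_distrib, hzero, sub_zero]
  have hone : ∑ d ∈ Wfin (wt e), (MvPowerSeries.coeff (R := k) d f)
      * (MvPowerSeries.coeff (R := k) e (MvPowerSeries.monomial (R := k) d 1))
      = MvPowerSeries.coeff (R := k) e f := by
    rw [Finset.sum_eq_single e]
    · rw [MvPowerSeries.coeff_monomial_same, mul_one]
    · intro d _ hne
      rw [MvPowerSeries.coeff_monomial_ne (fun hh => hne hh.symm), mul_zero]
    · intro he
      exact absurd (mem_Wfin.mpr rfl) he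
  rw [hone]

end NS17


open NS17

lemma rel_mem_theRelations (k : Type u) [Field k] (i : Fin 6) :
    Rel k i ∈ theRelations k := by
  apply Ideal.subset_span
  show Rel k i ∈ ({_, _, _, _, _, _} : Set (MvPowerSeries (Fin 4) k))
  simp only [Set.mem_insert_iff, Set.mem_singleton_iff]
  fin_cases i
  · exact Or.inl rfl
  · exact Or.inr (Or.inl rfl)
  · exact Or.inr (Or.inr (Or.inl rfl))
  · exact Or.inr (Or.inr (Or.inr (Or.inl rfl)))
  · exact Or.inr (Or.inr (Or.inr (Or.inr (Or.inl rfl))))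
  · exact Or.inr (Or.inr (Or.inr (Or.inr (Or.inr rfl))))

lemma theRelations_le_ker (k : Type u) [Field k] :
    ∀ a ∈ theRelations k, phi k a = 0 := by
  intro a ha
  have h : theRelations k ≤ RingHom.ker (phi k).toRingHom := by
    rw [theRelations, Ideal.span_le]
    intro x hx
    simp only [Set.mem_insert_iff, Set.mem_singleton_iff] at hx
    rcases hx with rfl | rfl | rfl | rfl | rfl | rfl
    · exact phi_Rel k 0
    · exact phi_Rel k 1
    · exact phi_Rel k 2
    · exact phi_Rel k 3
    · exact phi_Rel k 4
    · exact phi_Rel k 5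
  exact h ha

/-- Let `k` be a field and `S = k[[x,y,z,w]]`.  The `k`-algebra map
`S → k[[t]]`, `x ↦ t⁵, y ↦ t⁶, z ↦ t¹³, w ↦ t¹⁴`, induces an isomorphism
`S/(y³−xz, yz−xw, x⁴−yw, z²−y²w, x³y²−zw, x³z−w²) ≅ k[[t⁵,t⁶,t¹³,t¹⁴]]`, the latter being the
subring of `k[[t]]` of power series supported on the numerical semigroup `⟨5,6,13,14⟩`:
there is an injective `k`-algebra map from the quotient, sending the classes of `x, y, z, w` to
`t⁵, t⁶, t¹³, t¹⁴`, whose range is exactly `k[[t⁵,t⁶,t¹³,t¹⁴]]`. -/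
theorem powerSeries_quotient_iso_semigroupRing (k : Type u) [Field k] :
    ∃ f : (MvPowerSeries (Fin 4) k ⧸ theRelations k) →ₐ[k] PowerSeries k,
      Function.Injective f ∧
      Set.range f = {g : PowerSeries k | ∀ d : ℕ, PowerSeries.coeff (R := k) d g ≠ 0 →
        d ∈ AddSubmonoid.closure ({5, 6, 13, 14} : Set ℕ)} ∧
      f (Ideal.Quotient.mk (theRelations k) (X 0)) = PowerSeries.X ^ 5 ∧
      f (Ideal.Quotient.mk (theRelations k) (X 1)) = PowerSeries.X ^ 6 ∧
      f (Ideal.Quotient.mk (theRelations k) (X 2)) = PowerSeries.X ^ 13 ∧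
      f (Ideal.Quotient.mk (theRelations k) (X 3)) = PowerSeries.X ^ 14 := by
  have hlift : ∀ x, Ideal.Quotient.liftₐ (theRelations k) (phi k) (fun a ha => theRelations_le_ker k a ha)
      (Ideal.Quotient.mk (theRelations k) x)
      = (phi k : MvPowerSeries (Fin 4) k →+* PowerSeries k) x := fun x => rfl
  refine ⟨Ideal.Quotient.liftₐ (theRelations k) (phi k) (fun a ha => theRelations_le_ker k a ha), ?_, ?_, ?_, ?_, ?_, ?_⟩
  · -- injectivity
    rw [injective_iff_map_eq_zero]
    intro a ha
    obtain ⟨g, rfl⟩ := Ideal.Quotient.mk_surjective a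
    rw [hlift] at ha
    obtain ⟨s, hs⟩ := ker_lemma k g ha
    rw [Ideal.Quotient.eq_zero_iff_mem, hs]
    exact Ideal.sum_mem _ fun i _ => Ideal.mul_mem_left _ _ (rel_mem_theRelations k i)
  · -- range
    ext g
    simp only [Set.mem_range, Set.mem_setOf_eq]
    constructor
    · rintro ⟨a, rfl⟩
      obtain ⟨h, rfl⟩ := Ideal.Quotient.mk_surjective a
      rw [hlift]
      simp only [RingHom.coe_coe]
      intro n hn
      rw [coeff_phi] at hn
      obtain ⟨d, hd, -⟩ := Finset.exists_ne_zero_of_sum_ne_zero hn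
      rw [mem_Wfin] at hd
      rw [← hd]
      exact wt_mem d
    · intro hg
      set F : MvPowerSeries (Fin 4) k := show MvPowerSeries (Fin 4) k from fun d =>
        if d = nf (wt d) then PowerSeries.coeff (R := k) (wt d) g else 0 with hF
      have hcF : ∀ d : M, MvPowerSeries.coeff (R := k) d F
          = if d = nf (wt d) then PowerSeries.coeff (R := k) (wt d) g else 0 := fun d => rfl
      refine ⟨Ideal.Quotient.mk (theRelations k) F, ?_⟩
      rw [hlift]
      simp only [RingHom.coe_coe]
      ext n
      rw [coeff_phi]
      by_cases hn : n ∈ AddSubmonoid.closure ({5, 6, 13, 14} : Set ℕ)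
      · have hcong : ∀ d ∈ Wfin n, MvPowerSeries.coeff (R := k) d F
            = if d = nf n then PowerSeries.coeff (R := k) n g else 0 := by
          intro d hd
          rw [mem_Wfin] at hd
          rw [hcF, hd]
        rw [Finset.sum_congr rfl hcong, Finset.sum_ite_eq' (Wfin n) (nf n)
          (fun _ => PowerSeries.coeff (R := k) n g), if_pos (mem_Wfin.mpr (wt_nf hn))]
      · have hW : Wfin n = ∅ := by
          rw [Finset.eq_empty_iff_forall_notMem]
          intro d hd
          rw [mem_Wfin] at hd
          exact hn (hd ▸ wt_mem d)
        rw [hW, Finset.sum_empty]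
        by_contra hne
        exact hn (hg n fun hc => hne hc.symm)
  all_goals {
    rw [hlift]
    simp only [RingHom.coe_coe]
    rw [phi_X]
    norm_num <;> rfl
  }
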